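/- arXiv:1312.1526 — 5 statements merged into one kernel-verified Lean document; each statement's English description precedes it below -/
import Mathlib

section
/- Let P and Q be upward paths in ℝ² with disjoint images. Then Right(P) ∩ Q = ∅ or Left(P) ∩ Q = ∅, where Q is identified with its image. -/
open Set

/-- An upward path: a continuous injective curve on `[0,1]` in `ℝ²` whose
y-coordinate is strictly monotone increasing. -/
structure UpwardPath where
  toFun : ℝ → ℝ × ℝ
  continuousOn : ContinuousOn toFun (Set.Icc 0 1)
  injOn : Set.InjOn toFun (Set.Icc 0 1)
  strictMonoY : StrictMonoOn (fun t => (toFun t).2) (Set.Icc 0 1)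

namespace UpwardPath

/-- The image (trace) of an upward path in the plane. -/
def image (P : UpwardPath) : Set (ℝ × ℝ) := P.toFun '' Set.Icc 0 1

/-- The set of points strictly to the right of `P`, at heights in the y-range of `P`. -/
def Right (P : UpwardPath) : Set (ℝ × ℝ) :=
  {p | (P.toFun 0).2 ≤ p.2 ∧ p.2 ≤ (P.toFun 1).2 ∧
    ∀ u' : ℝ, (u', p.2) ∈ P.image → u' < p.1}

/-- The set of points strictly to the left of `P`, at heights in the y-range of `P`. -/
def Left (P : UpwardPath) : Set (ℝ × ℝ) :=
  {p | (P.toFun 0).2 ≤ p.2 ∧ p.2 ≤ (P.toFun 1).2 ∧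
    ∀ u' : ℝ, (u', p.2) ∈ P.image → p.1 < u'}

/-- `P.Prec Q` (written `P ≺ Q`): some point of `Q` lies strictly to the right
(same y-coordinate, larger x-coordinate) of some point of `P`. -/
def Prec (P Q : UpwardPath) : Prop :=
  ∃ p ∈ P.image, ∃ q ∈ Q.image, p.2 = q.2 ∧ p.1 < q.1

/-- The y-range of an upward path. -/
def yRange (P : UpwardPath) : Set ℝ := Set.Icc (P.toFun 0).2 (P.toFun 1).2

end UpwardPath


/-- A continuous strictly monotone function on `[0,1]` has a continuous inverse
on `[f 0, f 1]`. -/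
lemma exists_cont_inv {f : ℝ → ℝ} (hf : ContinuousOn f (Icc 0 1))
    (hm : StrictMonoOn f (Icc 0 1)) :
    ∃ g : ℝ → ℝ, ContinuousOn g (Icc (f 0) (f 1)) ∧
      ∀ v ∈ Icc (f 0) (f 1), g v ∈ Icc (0:ℝ) 1 ∧ f (g v) = v := by
  have h01 : (0:ℝ) ≤ 1 := zero_le_one
  have h0 : (0:ℝ) ∈ Icc (0:ℝ) 1 := by simp
  have h1 : (1:ℝ) ∈ Icc (0:ℝ) 1 := by simp
  have hsurj : Icc (f 0) (f 1) ⊆ f '' Icc 0 1 := intermediate_value_Icc h01 hf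
  have hmaps : ∀ t ∈ Icc (0:ℝ) 1, f t ∈ Icc (f 0) (f 1) := by
    intro t ht
    exact ⟨hm.monotoneOn h0 ht ht.1, hm.monotoneOn ht h1 ht.2⟩
  -- build the equivalence between subtypes
  have hbij : Function.Bijective (fun x : Icc (0:ℝ) 1 =>
      (⟨f x, hmaps x x.2⟩ : Icc (f 0) (f 1))) := by
    constructor
    · intro a b hab
      exact Subtype.ext (hm.injOn a.2 b.2 (congrArg Subtype.val hab))
    · rintro ⟨v, hv⟩
      obtain ⟨t, ht, hft⟩ := hsurj hv
      exact ⟨⟨t, ht⟩, Subtype.ext hft⟩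
  let e : Icc (0:ℝ) 1 ≃ Icc (f 0) (f 1) := Equiv.ofBijective _ hbij
  have hcont : Continuous e := by
    apply Continuous.subtype_mk
    exact hf.restrict

  let h := Continuous.homeoOfEquivCompactToT2 (f := e) hcont
  classical
  refine ⟨fun v => if hv : v ∈ Icc (f 0) (f 1) then (h.symm ⟨v, hv⟩ : ℝ) else 0, ?_, ?_⟩
  · rw [continuousOn_iff_continuous_restrict]
    have : (Icc (f 0) (f 1)).restrict
        (fun v => if hv : v ∈ Icc (f 0) (f 1) then (h.symm ⟨v, hv⟩ : ℝ) else 0)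
        = fun x => (h.symm x : ℝ) := by
      funext x
      exact dif_pos x.2
    change Continuous ((Icc (f 0) (f 1)).restrict
        (fun v => if hv : v ∈ Icc (f 0) (f 1) then (h.symm ⟨v, hv⟩ : ℝ) else 0))
    rw [this]
    exact continuous_subtype_val.comp h.symm.continuous
  · intro v hv
    simp only [dif_pos hv]
    refine ⟨(h.symm ⟨v, hv⟩).2, ?_⟩
    have := h.apply_symm_apply ⟨v, hv⟩
    have := congrArg Subtype.val this
    exact this

/-- For vertex-disjoint upward paths `P` and `Q`, either `Q` avoids the region
to the right of `P` or it avoids the region to the left of `P`. -/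
theorem path_right_or_left (P Q : UpwardPath)
    (hdisj : Disjoint P.image Q.image) :
    P.Right ∩ Q.image = ∅ ∨ P.Left ∩ Q.image = ∅ := by
  by_contra hcon
  push_neg at hcon
  obtain ⟨hR, hL⟩ := hcon
  obtain ⟨q₁, hq₁R, hq₁Q⟩ := hR
  obtain ⟨q₂, hq₂L, hq₂Q⟩ := hL
  -- y-coordinate of P and its continuous inverse
  set fP : ℝ → ℝ := fun t => (P.toFun t).2 with hfP
  have hfPc : ContinuousOn fP (Icc 0 1) := continuous_snd.comp_continuousOn P.continuousOn
  obtain ⟨g, hgc, hg⟩ := exists_cont_inv hfPc P.strictMonoY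
  -- the x-coordinate of P at a given height
  set xg : ℝ → ℝ := fun v => (P.toFun (g v)).1 with hxg
  have hxgc : ContinuousOn xg (Icc (fP 0) (fP 1)) :=
    continuous_fst.comp_continuousOn
      (P.continuousOn.comp hgc (fun v hv => (hg v hv).1))
  have hxg_mem : ∀ v ∈ Icc (fP 0) (fP 1), (xg v, v) ∈ P.image := by
    intro v hv
    refine ⟨g v, (hg v hv).1, ?_⟩
    have h2 : (P.toFun (g v)).2 = v := (hg v hv).2
    exact Prod.ext rfl h2
  -- the two points of Q
  obtain ⟨s₁, hs₁, hQs₁⟩ := hq₁Q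
  obtain ⟨s₂, hs₂, hQs₂⟩ := hq₂Q
  obtain ⟨hy₁l, hy₁u, hq₁x⟩ := hq₁R
  obtain ⟨hy₂l, hy₂u, hq₂x⟩ := hq₂L
  have hv₁ : q₁.2 ∈ Icc (fP 0) (fP 1) := ⟨hy₁l, hy₁u⟩
  have hv₂ : q₂.2 ∈ Icc (fP 0) (fP 1) := ⟨hy₂l, hy₂u⟩
  -- the sign function along Q
  set F : ℝ → ℝ := fun s => (Q.toFun s).1 - xg ((Q.toFun s).2) with hF
  set S : Set ℝ := Icc 0 1 ∩ {s | (Q.toFun s).2 ∈ Icc (fP 0) (fP 1)} with hS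
  have hFc : ContinuousOn F S := by
    apply ContinuousOn.sub
    · exact continuous_fst.comp_continuousOn (Q.continuousOn.mono inter_subset_left)
    · exact hxgc.comp
        ((continuous_snd.comp_continuousOn (Q.continuousOn.mono inter_subset_left)))
        (fun s hs => hs.2)
  have hs₁S : s₁ ∈ S := ⟨hs₁, by rw [mem_setOf_eq, hQs₁]; exact hv₁⟩
  have hs₂S : s₂ ∈ S := ⟨hs₂, by rw [mem_setOf_eq, hQs₂]; exact hv₂⟩
  -- uIcc s₁ s₂ ⊆ S
  have huIcc : uIcc s₁ s₂ ⊆ S := by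
    intro s hs
    have hsm : s₁ ⊓ s₂ ≤ s := hs.1
    have hsM : s ≤ s₁ ⊔ s₂ := hs.2
    have hs01 : s ∈ Icc (0:ℝ) 1 := by
      constructor
      · exact le_trans (le_inf hs₁.1 hs₂.1) hsm
      · exact le_trans hsM (sup_le hs₁.2 hs₂.2)
    have hm01 : s₁ ⊓ s₂ ∈ Icc (0:ℝ) 1 := ⟨le_inf hs₁.1 hs₂.1, le_trans inf_le_left hs₁.2⟩
    have hM01 : s₁ ⊔ s₂ ∈ Icc (0:ℝ) 1 := ⟨le_trans hs₁.1 le_sup_left, sup_le hs₁.2 hs₂.2⟩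
    refine ⟨hs01, ?_, ?_⟩
    · calc fP 0 ≤ (Q.toFun (s₁ ⊓ s₂)).2 := by
            rcases min_cases s₁ s₂ with ⟨h', _⟩ | ⟨h', _⟩
            · rw [h']; rw [hQs₁]; exact hy₁l
            · rw [h']; rw [hQs₂]; exact hy₂l
        _ ≤ (Q.toFun s).2 := Q.strictMonoY.monotoneOn hm01 hs01 hsm
    · calc (Q.toFun s).2 ≤ (Q.toFun (s₁ ⊔ s₂)).2 := Q.strictMonoY.monotoneOn hs01 hM01 hsM
        _ ≤ fP 1 := by
            rcases max_cases s₁ s₂ with ⟨h', _⟩ | ⟨h', _⟩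
            · rw [h']; rw [hQs₁]; exact hy₁u
            · rw [h']; rw [hQs₂]; exact hy₂u
  -- sign values
  have hF₁ : 0 < F s₁ := by
    have := hq₁x (xg q₁.2) (hxg_mem q₁.2 hv₁)
    simp only [hF]
    rw [hQs₁]
    linarith
  have hF₂ : F s₂ < 0 := by
    have := hq₂x (xg q₂.2) (hxg_mem q₂.2 hv₂)
    simp only [hF]
    rw [hQs₂]
    linarith
  -- intermediate value
  have h0 : (0:ℝ) ∈ uIcc (F s₁) (F s₂) := by
    rw [mem_uIcc]
    right
    exact ⟨hF₂.le, hF₁.le⟩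
  obtain ⟨s₀, hs₀, hFs₀⟩ := intermediate_value_uIcc (hFc.mono huIcc) h0
  have hs₀S : s₀ ∈ S := huIcc hs₀
  have hQP : Q.toFun s₀ ∈ P.image := by
    have hx : (Q.toFun s₀).1 = xg ((Q.toFun s₀).2) := by
      have : (Q.toFun s₀).1 - xg ((Q.toFun s₀).2) = 0 := hFs₀
      linarith
    have := hxg_mem ((Q.toFun s₀).2) hs₀S.2
    rwa [← hx, Prod.mk.eta] at this
  exact absurd hQP (disjoint_left.mp hdisj.symm ⟨s₀, hs₀S.1, rfl⟩)
end

section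
/- Let P₁ and P₂ be upward paths in ℝ² with disjoint images. If P₁ ≺ P₂ then not P₂ ≺ P₁. That is, it cannot happen that simultaneously there is a height y at which the point of P₂ lies strictly to the right of the point of P₁, and a height y' at which the point of P₁ lies strictly to the right of the point of P₂. -/
open Set

namespace UpwardPath

variable (P : UpwardPath)

lemma mem_yRange_of_mem_image {u y : ℝ} (h : (u, y) ∈ P.image) : y ∈ P.yRange := by
  obtain ⟨t, ht, hEq⟩ := h
  have h2 : (P.toFun t).2 = y := by rw [hEq]
  constructor
  · rw [← h2]
    exact P.strictMonoY.monotoneOn (left_mem_Icc.2 one_pos.le) ht ht.1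
  · rw [← h2]
    exact P.strictMonoY.monotoneOn ht (right_mem_Icc.2 one_pos.le) ht.2

lemma contY : ContinuousOn (fun t => (P.toFun t).2) (Set.Icc 0 1) :=
  P.continuousOn.snd

/-- The parametrization map to the y-range, as a function on subtypes. -/
noncomputable def eMap : Set.Icc (0:ℝ) 1 → P.yRange := fun t =>
  ⟨(P.toFun t).2, ⟨P.strictMonoY.monotoneOn (left_mem_Icc.2 one_pos.le) t.2 t.2.1,
    P.strictMonoY.monotoneOn t.2 (right_mem_Icc.2 one_pos.le) t.2.2⟩⟩

lemma eMap_continuous : Continuous P.eMap :=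
  Continuous.subtype_mk (continuousOn_iff_continuous_restrict.mp P.contY) _

lemma eMap_bijective : Function.Bijective P.eMap := by
  constructor
  · intro a b hab
    have : (P.toFun a).2 = (P.toFun b).2 := congrArg Subtype.val hab
    exact Subtype.ext (P.strictMonoY.injOn a.2 b.2 this)
  · rintro ⟨y, hy⟩
    have hsub := intermediate_value_Icc (zero_le_one (α := ℝ)) P.contY
    obtain ⟨t, ht, hEq⟩ := hsub hy
    exact ⟨⟨t, ht⟩, Subtype.ext hEq⟩

/-- Homeomorphism between the parameter interval and the y-range. -/
noncomputable def homeo : Set.Icc (0:ℝ) 1 ≃ₜ P.yRange :=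
  Continuous.homeoOfEquivCompactToT2
    (f := Equiv.ofBijective P.eMap P.eMap_bijective) P.eMap_continuous

open scoped Classical in
/-- x-coordinate of the point of `P` at a given height. -/
noncomputable def xAt (y : ℝ) : ℝ :=
  if h : y ∈ P.yRange then (P.toFun (P.homeo.symm ⟨y, h⟩)).1 else 0

lemma xAt_mem_image {y : ℝ} (hy : y ∈ P.yRange) : (P.xAt y, y) ∈ P.image := by
  classical
  rw [xAt, dif_pos hy]
  set t : Set.Icc (0:ℝ) 1 := P.homeo.symm ⟨y, hy⟩ with ht
  have h1 : P.homeo t = ⟨y, hy⟩ := by rw [ht]; exact P.homeo.apply_symm_apply _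
  have h2 : (P.toFun t).2 = y := congrArg Subtype.val h1
  exact ⟨t, t.2, by rw [← h2]⟩

lemma eq_xAt_of_mem_image {u y : ℝ} (h : (u, y) ∈ P.image) : u = P.xAt y := by
  have hy := P.mem_yRange_of_mem_image h
  obtain ⟨t, ht, hEq⟩ := h
  obtain ⟨s, hs, hEq'⟩ := P.xAt_mem_image hy
  have h2 : (P.toFun t).2 = (P.toFun s).2 := by rw [hEq, hEq']
  have : t = s := P.strictMonoY.injOn ht hs h2
  subst this
  have : (P.toFun t).1 = u := by rw [hEq]
  rw [← this, hEq']

lemma xAt_continuousOn : ContinuousOn P.xAt P.yRange := by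
  rw [continuousOn_iff_continuous_restrict]
  have : Set.restrict P.yRange P.xAt =
      fun z : P.yRange => (P.toFun (P.homeo.symm z)).1 := by
    funext z
    classical
    simp [Set.restrict, xAt, dif_pos z.2]
  rw [show P.yRange.domRestrict P.xAt = _ from this]
  exact ((continuousOn_iff_continuous_restrict.mp P.continuousOn).fst).comp
    P.homeo.symm.continuous

end UpwardPath

/-- The relation `≺` is anti-symmetric on disjoint upward paths: if `P₁ ≺ P₂`
then not `P₂ ≺ P₁`. -/
theorem prec_antisymm (P₁ P₂ : UpwardPath)
    (hdisj : Disjoint P₁.image P₂.image) (h : P₁.Prec P₂) : ¬ P₂.Prec P₁ := by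
  rintro ⟨p', hp', q', hq', hy', hx'⟩
  obtain ⟨p, hp, q, hq, hy, hx⟩ := h
  -- heights
  obtain ⟨a, b, ha, hb⟩ : ∃ a b : ℝ, a = p.2 ∧ b = p'.2 := ⟨p.2, p'.2, rfl, rfl⟩
  have hpa : (p.1, a) ∈ P₁.image := by rw [ha, Prod.mk.eta]; exact hp
  have hqa : (q.1, a) ∈ P₂.image := by rw [ha, hy, Prod.mk.eta]; exact hq
  have hpb : (p'.1, b) ∈ P₂.image := by rw [hb, Prod.mk.eta]; exact hp'
  have hqb : (q'.1, b) ∈ P₁.image := by rw [hb, hy', Prod.mk.eta]; exact hq'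
  have ha1 : a ∈ P₁.yRange := P₁.mem_yRange_of_mem_image hpa
  have ha2 : a ∈ P₂.yRange := P₂.mem_yRange_of_mem_image hqa
  have hb1 : b ∈ P₁.yRange := P₁.mem_yRange_of_mem_image hqb
  have hb2 : b ∈ P₂.yRange := P₂.mem_yRange_of_mem_image hpb
  have hsub1 : Set.uIcc a b ⊆ P₁.yRange :=
    Set.OrdConnected.uIcc_subset Set.ordConnected_Icc ha1 hb1
  have hsub2 : Set.uIcc a b ⊆ P₂.yRange :=
    Set.OrdConnected.uIcc_subset Set.ordConnected_Icc ha2 hb2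
  set D : ℝ → ℝ := fun y => P₂.xAt y - P₁.xAt y with hD
  have hcont : ContinuousOn D (Set.uIcc a b) :=
    (P₂.xAt_continuousOn.mono hsub2).sub (P₁.xAt_continuousOn.mono hsub1)
  have hDa : 0 < D a := by
    have h1 : p.1 = P₁.xAt a := P₁.eq_xAt_of_mem_image hpa
    have h2 : q.1 = P₂.xAt a := P₂.eq_xAt_of_mem_image hqa
    simp only [hD]
    rw [← h1, ← h2]
    linarith
  have hDb : D b < 0 := by
    have h1 : q'.1 = P₁.xAt b := P₁.eq_xAt_of_mem_image hqb
    have h2 : p'.1 = P₂.xAt b := P₂.eq_xAt_of_mem_image hpb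
    simp only [hD]
    rw [← h1, ← h2]
    linarith
  have h0 : (0:ℝ) ∈ Set.uIcc (D a) (D b) := by
    exact Set.mem_uIcc.mpr (Or.inr ⟨hDb.le, hDa.le⟩)
  obtain ⟨c, hc, hDc⟩ := intermediate_value_uIcc hcont h0
  have hxeq : P₁.xAt c = P₂.xAt c := by
    have : P₂.xAt c - P₁.xAt c = 0 := hDc
    linarith
  have h1 : (P₁.xAt c, c) ∈ P₁.image := P₁.xAt_mem_image (hsub1 hc)
  have h2 : (P₁.xAt c, c) ∈ P₂.image := by rw [hxeq]; exact P₂.xAt_mem_image (hsub2 hc)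
  exact Set.disjoint_left.mp hdisj h1 h2
end

section
/- Let P and Q be disjoint upward paths that are incomparable with respect to ≺ in both directions (neither P ≺ Q nor Q ≺ P). Then the y-ranges of P and Q intersect in at most one point; in particular, (Right(P) ∪ Left(P)) ∩ (Right(Q) ∪ Left(Q)) has empty interior, i.e., one path lies (weakly) strictly above the other. -/
open Set

/-- If two disjoint upward paths are incomparable with respect to `≺` in both
directions, then their y-ranges meet in at most one point; in particular the
intersection of their left/right regions has empty interior (one path lies
above the other). -/
theorem incomparable_above (P Q : UpwardPath)
    (hdisj : Disjoint P.image Q.image)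
    (h₁ : ¬ P.Prec Q) (h₂ : ¬ Q.Prec P) :
    (P.yRange ∩ Q.yRange).Subsingleton ∧
    interior ((P.Right ∪ P.Left) ∩ (Q.Right ∪ Q.Left)) = ∅ := by
  have key : P.yRange ∩ Q.yRange = ∅ := by
    by_contra h
    obtain ⟨y, hyP, hyQ⟩ := Set.nonempty_iff_ne_empty.mpr h
    have hP := intermediate_value_Icc (zero_le_one (α := ℝ))
      (continuous_snd.comp_continuousOn P.continuousOn) hyP
    have hQ := intermediate_value_Icc (zero_le_one (α := ℝ))
      (continuous_snd.comp_continuousOn Q.continuousOn) hyQ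
    obtain ⟨s, hs, hsy⟩ := hP
    obtain ⟨t, ht, hty⟩ := hQ
    have hpq : P.toFun s ≠ Q.toFun t :=
      hdisj.ne_of_mem ⟨s, hs, rfl⟩ ⟨t, ht, rfl⟩
    have hx : (P.toFun s).1 ≠ (Q.toFun t).1 := by
      intro hh; exact hpq (Prod.ext hh (hsy.trans hty.symm))
    rcases hx.lt_or_gt with hlt | hlt
    · exact h₁ ⟨_, ⟨s, hs, rfl⟩, _, ⟨t, ht, rfl⟩, hsy.trans hty.symm, hlt⟩
    · exact h₂ ⟨_, ⟨t, ht, rfl⟩, _, ⟨s, hs, rfl⟩, hty.trans hsy.symm, hlt⟩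
  constructor
  · rw [key]; exact Set.subsingleton_empty
  · have hempty : (P.Right ∪ P.Left) ∩ (Q.Right ∪ Q.Left) = ∅ := by
      ext p
      simp only [Set.mem_inter_iff, Set.mem_union, Set.mem_empty_iff_false, iff_false]
      rintro ⟨hp, hq⟩
      have hyP : p.2 ∈ P.yRange := by rcases hp with h | h <;> exact ⟨h.1, h.2.1⟩
      have hyQ : p.2 ∈ Q.yRange := by rcases hq with h | h <;> exact ⟨h.1, h.2.1⟩
      have : p.2 ∈ P.yRange ∩ Q.yRange := ⟨hyP, hyQ⟩
      rw [key] at this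
      exact this
    rw [hempty, interior_empty]
end

section
/- Let P be an upward path from s to t and P' another upward path from s to t (same endpoints). If P' contains a point of Right(P), then there exists an upward path Q from s to t such that the image of Q is contained in P ∪ Right(P) and Q contains a point of Right(P). -/
open Set

lemma exists_sigma (P : UpwardPath) :
    ∃ σ : ℝ → ℝ, Continuous σ ∧ (∀ y, σ y ∈ Icc (0:ℝ) 1) ∧
      ∀ y ∈ Icc (P.toFun 0).2 (P.toFun 1).2, (P.toFun (σ y)).2 = y := by
  have h0 : (0:ℝ) ∈ Icc (0:ℝ) 1 := by constructor <;> norm_num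
  have h1 : (1:ℝ) ∈ Icc (0:ℝ) 1 := by constructor <;> norm_num
  have hle : (P.toFun 0).2 ≤ (P.toFun 1).2 := (P.strictMonoY h0 h1 one_pos).le
  have hycont : ContinuousOn (fun t => (P.toFun t).2) (Icc 0 1) := P.continuousOn.snd
  have hmem : ∀ u : Icc (0:ℝ) 1, (P.toFun u).2 ∈ Icc (P.toFun 0).2 (P.toFun 1).2 := by
    intro u
    exact ⟨P.strictMonoY.monotoneOn h0 u.2 u.2.1, P.strictMonoY.monotoneOn u.2 h1 u.2.2⟩
  set F : Icc (0:ℝ) 1 → Icc (P.toFun 0).2 (P.toFun 1).2 :=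
    fun u => ⟨(P.toFun u).2, hmem u⟩ with hF
  have hFc : Continuous F := by
    apply Continuous.subtype_mk
    exact continuousOn_iff_continuous_restrict.mp hycont
  have hFbij : Function.Bijective F := by
    constructor
    · intro a b hab
      have : (P.toFun a).2 = (P.toFun b).2 := congrArg Subtype.val hab
      exact Subtype.ext (P.strictMonoY.injOn a.2 b.2 this)
    · rintro ⟨y, hy⟩
      have := intermediate_value_Icc (zero_le_one (α := ℝ)) hycont
      obtain ⟨u, hu, hu2⟩ := this hy
      exact ⟨⟨u, hu⟩, Subtype.ext hu2⟩
  let e := Equiv.ofBijective F hFbij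
  have hFc' : Continuous e := hFc
  let homeo := Continuous.homeoOfEquivCompactToT2 (f := e) hFc'
  refine ⟨fun y => (homeo.symm (projIcc _ _ hle y) : ℝ), ?_, ?_, ?_⟩
  · exact continuous_subtype_val.comp (homeo.symm.continuous.comp (continuous_projIcc))
  · intro y; exact (homeo.symm (projIcc _ _ hle y)).2
  · intro y hy
    have hproj : projIcc _ _ hle y = ⟨y, hy⟩ := projIcc_of_mem hle hy
    simp only [hproj]
    have : F (homeo.symm ⟨y, hy⟩) = ⟨y, hy⟩ := homeo.apply_symm_apply ⟨y, hy⟩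
    exact congrArg Subtype.val this

/-- Path combination lemma: if `P` and `P'` are upward paths with the same
endpoints and `P'` meets `Right P`, then there is an upward path `Q` with the
same endpoints whose image lies in `P ∪ Right P` and which meets `Right P`. -/
theorem path_comb (P P' : UpwardPath)
    (hs : P'.toFun 0 = P.toFun 0) (ht : P'.toFun 1 = P.toFun 1)
    (hmeets : (P'.image ∩ P.Right).Nonempty) :
    ∃ Q : UpwardPath, Q.toFun 0 = P.toFun 0 ∧ Q.toFun 1 = P.toFun 1 ∧
      Q.image ⊆ P.image ∪ P.Right ∧ (Q.image ∩ P.Right).Nonempty := by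
  classical
  have h0 : (0:ℝ) ∈ Icc (0:ℝ) 1 := by constructor <;> norm_num
  have h1 : (1:ℝ) ∈ Icc (0:ℝ) 1 := by constructor <;> norm_num
  obtain ⟨σ, σc, σmem, σy⟩ := exists_sigma P'
  -- rewrite the y-range of P' to that of P
  rw [hs, ht] at σy
  set y0 := (P.toFun 0).2 with hy0
  set y1 := (P.toFun 1).2 with hy1
  have hyrange : ∀ t ∈ Icc (0:ℝ) 1, (P.toFun t).2 ∈ Icc y0 y1 := by
    intro t htm
    exact ⟨P.strictMonoY.monotoneOn h0 htm htm.1, P.strictMonoY.monotoneOn htm h1 htm.2⟩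
  -- uniqueness of x-coordinates at a given height
  have hPuniq : ∀ t ∈ Icc (0:ℝ) 1, ∀ u' : ℝ, (u', (P.toFun t).2) ∈ P.image →
      u' = (P.toFun t).1 := by
    intro t htm u' hm
    obtain ⟨r, hr, hre⟩ := hm
    have h2 : (P.toFun r).2 = (P.toFun t).2 := by rw [hre]
    have : r = t := P.strictMonoY.injOn hr htm h2
    rw [this] at hre; rw [hre]
  have hP'uniq : ∀ y ∈ Icc y0 y1, ∀ u' : ℝ, (u', y) ∈ P'.image →
      u' = (P'.toFun (σ y)).1 := by
    intro y hy u' hm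
    obtain ⟨r, hr, hre⟩ := hm
    have h2 : (P'.toFun r).2 = (P'.toFun (σ y)).2 := by rw [hre, σy y hy]
    have : r = σ y := P'.strictMonoY.injOn hr (σmem y) h2
    rw [this] at hre; rw [hre]
  -- the combined path
  set g : ℝ → ℝ × ℝ :=
    fun t => ((P.toFun t).1 ⊔ (P'.toFun (σ (P.toFun t).2)).1, (P.toFun t).2) with hg
  have hgc : ContinuousOn g (Icc 0 1) := by
    have csnd : ContinuousOn (fun t => (P.toFun t).2) (Icc 0 1) := P.continuousOn.snd
    have cσ : ContinuousOn (fun t => σ (P.toFun t).2) (Icc 0 1) :=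
      σc.comp_continuousOn csnd
    have cP' : ContinuousOn (fun t => (P'.toFun (σ (P.toFun t).2)).1) (Icc 0 1) := by
      apply ContinuousOn.fst
      exact P'.continuousOn.comp cσ (fun t _ => σmem _)
    exact (P.continuousOn.fst.sup cP').prodMk csnd
  have hgy : ∀ t, (g t).2 = (P.toFun t).2 := fun t => rfl
  set Q : UpwardPath :=
    { toFun := g
      continuousOn := hgc
      injOn := by
        intro a ha b hb hab
        have h2 := congrArg Prod.snd hab
        simp only [hg] at h2
        exact P.strictMonoY.injOn ha hb h2
      strictMonoY := P.strictMonoY } with hQ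
  have hσ0 : σ y0 = 0 := by
    apply P'.strictMonoY.injOn (σmem y0) h0
    show (P'.toFun (σ y0)).2 = (P'.toFun 0).2
    rw [σy y0 (left_mem_Icc.mpr ((P.strictMonoY h0 h1 one_pos).le)), hs]
  have hσ1 : σ y1 = 1 := by
    apply P'.strictMonoY.injOn (σmem y1) h1
    show (P'.toFun (σ y1)).2 = (P'.toFun 1).2
    rw [σy y1 (right_mem_Icc.mpr ((P.strictMonoY h0 h1 one_pos).le)), ht]
  refine ⟨Q, ?_, ?_, ?_, ?_⟩
  · show g 0 = P.toFun 0
    have : (P'.toFun (σ (P.toFun 0).2)).1 = (P.toFun 0).1 := by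
      rw [show (P.toFun 0).2 = y0 from rfl, hσ0, hs]
    simp only [hg, this]
    exact Prod.ext (max_self _) rfl
  · show g 1 = P.toFun 1
    have : (P'.toFun (σ (P.toFun 1).2)).1 = (P.toFun 1).1 := by
      rw [show (P.toFun 1).2 = y1 from rfl, hσ1, ht]
    simp only [hg, this]
    exact Prod.ext (max_self _) rfl
  · rintro p ⟨t, htm, rfl⟩
    rcases le_or_gt (P'.toFun (σ (P.toFun t).2)).1 (P.toFun t).1 with hle | hlt
    · left
      have : g t = P.toFun t := Prod.ext (max_eq_left hle) rfl
      rw [show Q.toFun t = g t from rfl, this]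
      exact ⟨t, htm, rfl⟩
    · right
      refine ⟨(hyrange t htm).1, (hyrange t htm).2, ?_⟩
      intro u' hu'
      have := hPuniq t htm u' hu'
      rw [this]
      calc (P.toFun t).1 < (P'.toFun (σ (P.toFun t).2)).1 := hlt
        _ ≤ (g t).1 := le_max_right _ _
  · obtain ⟨q, hqP', hqR⟩ := hmeets
    have hqy : q.2 ∈ Icc y0 y1 := ⟨hqR.1, hqR.2.1⟩
    obtain ⟨τ, τc, τmem, τy⟩ := exists_sigma P
    set t := τ q.2 with htdef
    have htm : t ∈ Icc (0:ℝ) 1 := τmem q.2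
    have hty : (P.toFun t).2 = q.2 := τy q.2 hqy
    have hq1 : (q.1, q.2) ∈ P'.image := by rw [Prod.mk.eta]; exact hqP'
    have hxr : q.1 = (P'.toFun (σ q.2)).1 := hP'uniq q.2 hqy q.1 hq1
    have hxlt : (P.toFun t).1 < q.1 := by
      apply hqR.2.2
      refine ⟨t, htm, ?_⟩
      exact Prod.ext rfl hty
    have hgt : g t = q := by
      have : (P.toFun t).1 ⊔ (P'.toFun (σ (P.toFun t).2)).1 = q.1 := by
        rw [hty, ← hxr]
        exact max_eq_right hxlt.le
      simp only [hg]
      exact Prod.ext this hty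
    exact ⟨q, ⟨t, htm, hgt⟩, hqR⟩
end

section
/- Let 𝒫 = {P₁,…,P_k} be pairwise disjoint upward paths where P_i goes from s_i to t_i, and let P = P_i be maximal in 𝒫 with respect to ≺*. Let P' be an upward path from s_i to t_i with image contained in P ∪ Right(P). Then for every Q ∈ 𝒫 with Q ≠ P, the images of P' and Q are disjoint; hence (𝒫 \ {P}) ∪ {P'} is again a family of pairwise disjoint upward paths connecting the same terminal pairs. -/
open Set

/-- Exchange lemma: in a family of pairwise disjoint upward paths, a path `P i`
that is maximal with respect to `≺*` may be replaced by any upward path `P'`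
with the same endpoints lying in `P i ∪ Right (P i)`: the new path is disjoint
from all other paths, so the updated family is again pairwise disjoint. -/
theorem valid_solution_exchange {k : ℕ} (P : Fin k → UpwardPath)
    (hdisj : ∀ a b : Fin k, a ≠ b → Disjoint (P a).image (P b).image)
    (i : Fin k)
    (hmax : ∀ j : Fin k,
      ¬ Relation.TransGen (fun a b : Fin k => (P a).Prec (P b)) i j)
    (P' : UpwardPath)
    (hs : P'.toFun 0 = (P i).toFun 0) (ht : P'.toFun 1 = (P i).toFun 1)
    (hsub : P'.image ⊆ (P i).image ∪ (P i).Right) :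
    (∀ j : Fin k, j ≠ i → Disjoint P'.image (P j).image) ∧
    (∀ a b : Fin k, a ≠ b →
      Disjoint ((Function.update P i P') a).image
        ((Function.update P i P') b).image) := by
  
  have key : ∀ j : Fin k, j ≠ i → Disjoint P'.image (P j).image := by
    intro j hj
    rw [Set.disjoint_left]
    intro q hq hqj
    rcases hsub hq with hqP | hqR
    · exact (hdisj i j (Ne.symm hj)).le_bot ⟨hqP, hqj⟩
    · obtain ⟨h0, h1, hr⟩ := hqR
      obtain ⟨t, ht', hty⟩ := intermediate_value_Icc (by norm_num : (0:ℝ) ≤ 1)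
        (continuous_snd.comp_continuousOn (P i).continuousOn) ⟨h0, h1⟩
      have hp : ((P i).toFun t) ∈ (P i).image := ⟨t, ht', rfl⟩
      have hmem : (((P i).toFun t).1, q.2) ∈ (P i).image := by
        rw [← hty]; exact ⟨t, ht', rfl⟩
      have hlt : ((P i).toFun t).1 < q.1 := hr _ hmem
      exact hmax j (Relation.TransGen.single ⟨(P i).toFun t, hp, q, hqj, hty, hlt⟩)
  refine ⟨key, ?_⟩
  intro a b hab
  rcases eq_or_ne a i with rfl | ha
  · simp only [Function.update_self, Function.update_of_ne (Ne.symm hab)]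
    exact key b (Ne.symm hab)
  · rcases eq_or_ne b i with rfl | hb
    · simp only [Function.update_self, Function.update_of_ne ha]
      exact (key a ha).symm
    · simp only [Function.update_of_ne ha, Function.update_of_ne hb]
      exact hdisj a b hab
end
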